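/- Let Y be a real R×R×2 array whose two frontal R×R slices Y₁ and Y₂ are both nonsingular. If all eigenvalues of the matrix Y₂Y₁⁻¹ are real (its characteristic polynomial splits over ℝ) but Y₂Y₁⁻¹ is not diagonalizable over the reals, then the tensor rank of Y is at least R+1. -/

import Mathlib

open Matrix
open scoped BigOperators

/-- The tensor rank of a real `I × J × K` array: the smallest `R` such that the array
is a sum of `R` rank-1 (outer product) arrays. -/
noncomputable def tensorRank {I J K : ℕ} (Y : Fin I → Fin J → Fin K → ℝ) : ℕ :=
  sInf {R : ℕ | ∃ (a : Fin R → Fin I → ℝ) (b : Fin R → Fin J → ℝ) (c : Fin R → Fin K → ℝ),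
    ∀ i j k, Y i j k = ∑ r, a r i * b r j * c r k}

/-- Any tensor admits some rank-1 decomposition. -/
lemma tensor_decomp_exists {I J K : ℕ} (Y : Fin I → Fin J → Fin K → ℝ) :
    ∃ R, ∃ (a : Fin R → Fin I → ℝ) (b : Fin R → Fin J → ℝ) (c : Fin R → Fin K → ℝ),
      ∀ i j k, Y i j k = ∑ r, a r i * b r j * c r k := by
  classical
  set n := Fintype.card (Fin I × Fin J × Fin K) with hn
  let e : Fin I × Fin J × Fin K ≃ Fin n := Fintype.equivFin _
  refine ⟨n,
    fun r i => if (e.symm r).1 = i then Y (e.symm r).1 (e.symm r).2.1 (e.symm r).2.2 else 0,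
    fun r j => if (e.symm r).2.1 = j then 1 else 0,
    fun r k => if (e.symm r).2.2 = k then 1 else 0, ?_⟩
  intro i j k
  have h := Equiv.sum_comp e.symm
    (fun p : Fin I × Fin J × Fin K =>
      (if p.1 = i then Y p.1 p.2.1 p.2.2 else 0) *
      (if p.2.1 = j then (1:ℝ) else 0) * (if p.2.2 = k then 1 else 0))
  rw [h]
  simp [Fintype.sum_prod_type, ite_mul, mul_ite, Finset.sum_ite_eq']

/-- The key step: an exact `R`-term decomposition of `Y` makes `Y2 * Y1⁻¹` diagonalizable. -/
lemma key_lemma {R : ℕ} (Y : Fin R → Fin R → Fin 2 → ℝ)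
    (Y1 Y2 : Matrix (Fin R) (Fin R) ℝ)
    (hY1 : ∀ i j, Y1 i j = Y i j 0) (hY2 : ∀ i j, Y2 i j = Y i j 1)
    (h1 : IsUnit Y1.det)
    (a b : Fin R → Fin R → ℝ) (c : Fin R → Fin 2 → ℝ)
    (hdec : ∀ i j k, Y i j k = ∑ r, a r i * b r j * c r k) :
    ∃ (P D : Matrix (Fin R) (Fin R) ℝ),
      IsUnit P.det ∧ D.IsDiag ∧ Y2 * Y1⁻¹ = P * D * P⁻¹ := by
  classical
  set A : Matrix (Fin R) (Fin R) ℝ := Matrix.of (fun i r => a r i) with hA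
  set B : Matrix (Fin R) (Fin R) ℝ := Matrix.of (fun r j => b r j) with hB
  set d0 : Fin R → ℝ := fun r => c r 0 with hd0
  set d1 : Fin R → ℝ := fun r => c r 1 with hd1
  have hY1eq : Y1 = A * (Matrix.diagonal d0 * B) := by
    ext i j
    rw [hY1, hdec]
    simp only [Matrix.mul_apply, Matrix.diagonal_apply, hA, hB, Matrix.of_apply,
      ite_mul, zero_mul, Finset.sum_ite_eq, Finset.mem_univ, if_true]
    exact Finset.sum_congr rfl fun r _ => by ring
  have hY2eq : Y2 = A * (Matrix.diagonal d1 * B) := by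
    ext i j
    rw [hY2, hdec]
    simp only [Matrix.mul_apply, Matrix.diagonal_apply, hA, hB, Matrix.of_apply,
      ite_mul, zero_mul, Finset.sum_ite_eq, Finset.mem_univ, if_true]
    exact Finset.sum_congr rfl fun r _ => by ring
  have hdet : IsUnit (A.det * ((Matrix.diagonal d0).det * B.det)) := by
    rwa [← Matrix.det_mul, ← Matrix.det_mul, ← hY1eq]
  have hAdet : IsUnit A.det := (IsUnit.mul_iff.mp hdet).1
  have hBdet : IsUnit B.det := (IsUnit.mul_iff.mp (IsUnit.mul_iff.mp hdet).2).2
  refine ⟨A, Matrix.diagonal d1 * (Matrix.diagonal d0)⁻¹, hAdet, ?_, ?_⟩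
  · rw [Matrix.inv_diagonal, Matrix.diagonal_mul_diagonal]
    exact Matrix.isDiag_diagonal _
  · rw [hY1eq, hY2eq, Matrix.mul_inv_rev, Matrix.mul_inv_rev]
    simp only [Matrix.mul_assoc]
    rw [Matrix.mul_nonsing_inv_cancel_left B _ hBdet]

theorem stmt1 {R : ℕ} (Y : Fin R → Fin R → Fin 2 → ℝ)
    (Y1 Y2 : Matrix (Fin R) (Fin R) ℝ)
    (hY1 : ∀ i j, Y1 i j = Y i j 0) (hY2 : ∀ i j, Y2 i j = Y i j 1)
    (h1 : IsUnit Y1.det) (h2 : IsUnit Y2.det)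
    (hreal : ((Y2 * Y1⁻¹).charpoly).Splits)
    (hnondiag : ¬ ∃ (P D : Matrix (Fin R) (Fin R) ℝ),
      IsUnit P.det ∧ D.IsDiag ∧ Y2 * Y1⁻¹ = P * D * P⁻¹) :
    R + 1 ≤ tensorRank Y := by
  classical
  have hne : {S : ℕ | ∃ (a : Fin S → Fin R → ℝ) (b : Fin S → Fin R → ℝ)
      (c : Fin S → Fin 2 → ℝ), ∀ i j k, Y i j k = ∑ r, a r i * b r j * c r k}.Nonempty := by
    obtain ⟨n, h⟩ := tensor_decomp_exists Y
    exact ⟨n, h⟩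
  have hmem : ∃ (a : Fin (tensorRank Y) → Fin R → ℝ) (b : Fin (tensorRank Y) → Fin R → ℝ)
      (c : Fin (tensorRank Y) → Fin 2 → ℝ),
      ∀ i j k, Y i j k = ∑ r, a r i * b r j * c r k := by
    unfold tensorRank
    exact Nat.sInf_mem hne
  by_contra hcon
  push_neg at hcon
  obtain ⟨m, hle, a, b, c, hdec⟩ :
      ∃ m, m ≤ R ∧ ∃ (a : Fin m → Fin R → ℝ) (b : Fin m → Fin R → ℝ)
        (c : Fin m → Fin 2 → ℝ), ∀ i j k, Y i j k = ∑ r, a r i * b r j * c r k :=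
    ⟨tensorRank Y, Nat.lt_succ_iff.mp hcon, hmem⟩
  set a' : Fin R → Fin R → ℝ := fun r i => if h : (r : ℕ) < m then a ⟨r, h⟩ i else 0 with ha'
  set b' : Fin R → Fin R → ℝ := fun r j => if h : (r : ℕ) < m then b ⟨r, h⟩ j else 0 with hb'
  set c' : Fin R → Fin 2 → ℝ := fun r k => if h : (r : ℕ) < m then c ⟨r, h⟩ k else 0 with hc'
  have hpad : ∀ f : Fin m → ℝ,
      ∑ r : Fin m, f r = ∑ r : Fin R, (if h : (r : ℕ) < m then f ⟨r, h⟩ else 0) := by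
    intro f
    set g : ℕ → ℝ := fun n => if h : n < m then f ⟨n, h⟩ else 0 with hg
    calc ∑ r : Fin m, f r = ∑ r : Fin m, g r.val := by
          refine Finset.sum_congr rfl fun x _ => ?_
          simp [hg, x.isLt]
      _ = ∑ i ∈ Finset.range m, g i := Fin.sum_univ_eq_sum_range g m
      _ = ∑ i ∈ Finset.range R, g i := by
          refine Finset.sum_subset (Finset.range_subset_range.mpr hle) fun x _ hx => ?_
          have : ¬ x < m := by simpa using hx
          simp [hg, this]
      _ = ∑ r : Fin R, g r.val := (Fin.sum_univ_eq_sum_range g R).symm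
  have hdec' : ∀ i j k, Y i j k = ∑ r, a' r i * b' r j * c' r k := by
    intro i j k
    rw [hdec i j k, hpad (fun r => a r i * b r j * c r k)]
    refine Finset.sum_congr rfl fun r _ => ?_
    by_cases h : (r : ℕ) < m <;> simp [ha', hb', hc', h]
  exact hnondiag (key_lemma Y Y1 Y2 hY1 hY2 h1 a' b' c' hdec')
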